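/- Let p be a prime and S a sequence over Z/pZ in which every element occurs with multiplicity at most h. If the length of S is at least p, then S has a nonempty zero-sum subsequence of length at most h. -/

import Mathlib

open Pointwise

/-- A multiset with all multiplicities at most `h` can be partitioned into `h`
finsets (sets of distinct elements). -/
lemma aux_partition {α : Type*} [DecidableEq α] :
    ∀ (h : ℕ) (S : Multiset α), (∀ x, S.count x ≤ h) →
    ∃ L : List (Finset α), L.length = h ∧ (L.map Finset.val).sum = S := by
  intro h
  induction h with
  | zero =>
    intro S hm
    refine ⟨[], rfl, ?_⟩
    simp only [List.map_nil, List.sum_nil]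
    ext x
    have := hm x
    simp [Nat.le_zero.1 this]
  | succ n ih =>
    intro S hm
    obtain ⟨L', hlen, hsum⟩ := ih (S - S.dedup) (by
      intro x
      rw [Multiset.count_sub, Multiset.count_dedup]
      by_cases hx : x ∈ S
      · have := hm x
        simp only [hx, if_true]
        omega
      · simp [hx])
    refine ⟨S.toFinset :: L', by simp [hlen], ?_⟩
    simp only [List.map_cons, List.sum_cons, hsum, Multiset.toFinset_val]
    exact add_tsub_cancel_of_le (Multiset.dedup_le S)

/-- Iterated Cauchy-Davenport for lists of nonempty finsets in `ZMod p`. -/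
lemma aux_cd {p : ℕ} (hp : p.Prime) :
    ∀ L : List (Finset (ZMod p)), (∀ C ∈ L, C.Nonempty) →
    min p ((L.map (fun C => C.card - 1)).sum + 1) ≤ L.sum.card := by
  intro L
  induction L with
  | nil =>
    intro _
    simp only [List.map_nil, List.sum_nil, Nat.zero_add]
    have : (0 : Finset (ZMod p)).card = 1 := by
      rw [show (0 : Finset (ZMod p)) = {0} from rfl]
      simp
    rw [this]
    exact min_le_right _ _
  | cons C L ihL =>
    intro hne
    have hC : C.Nonempty := hne C (List.mem_cons_self)
    have hL : ∀ D ∈ L, D.Nonempty := fun D hD => hne D (List.mem_cons_of_mem _ hD)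
    have hLsum : (L.sum : Finset (ZMod p)).Nonempty := by
      clear ihL hne
      induction L with
      | nil => exact ⟨0, by simp [show (0 : Finset (ZMod p)) = {0} from rfl]⟩
      | cons D L ih =>
        have hD : D.Nonempty := hL D (List.mem_cons_self)
        have hLs := ih (fun E hE => hL E (List.mem_cons_of_mem _ hE))
        obtain ⟨d, hd⟩ := hD
        obtain ⟨s, hs⟩ := hLs
        exact ⟨d + s, by rw [List.sum_cons]; exact Finset.add_mem_add hd hs⟩
    have hcd := ZMod.cauchy_davenport hp hC hLsum
    have hrec := ihL hL
    rw [List.sum_cons, List.map_cons, List.sum_cons]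
    have hC1 : 1 ≤ C.card := Finset.card_pos.2 hC
    have hLs1 : 1 ≤ L.sum.card := Finset.card_pos.2 hLsum
    rcases min_le_iff.1 hrec with h1 | h2
    · refine le_trans ?_ hcd
      apply le_min (min_le_left _ _)
      calc min p (C.card - 1 + ((L.map fun C => C.card - 1).sum + 1))
          ≤ p := min_le_left _ _
        _ ≤ C.card + L.sum.card - 1 := by omega
    · refine le_trans ?_ hcd
      apply le_min (min_le_left _ _)
      calc min p (C.card - 1 + ((L.map fun C => C.card - 1).sum + 1))
          ≤ C.card - 1 + ((L.map fun C => C.card - 1).sum + 1) := min_le_right _ _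
        _ ≤ C.card + L.sum.card - 1 := by omega

/-- Membership in a pointwise sum of a list of finsets gives a selection. -/
lemma aux_mem_sum {α : Type*} [AddCommMonoid α] [DecidableEq α] :
    ∀ (L : List (Finset α)) (x : α), x ∈ L.sum →
    ∃ l : List α, List.Forall₂ (· ∈ ·) l L ∧ l.sum = x := by
  intro L
  induction L with
  | nil =>
    intro x hx
    rw [List.sum_nil, show (0 : Finset α) = {0} from rfl, Finset.mem_singleton] at hx
    exact ⟨[], List.Forall₂.nil, by simp [hx]⟩
  | cons C L ih =>
    intro x hx
    rw [List.sum_cons, Finset.mem_add] at hx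
    obtain ⟨b, hb, c, hc, hbc⟩ := hx
    obtain ⟨l, hl, hls⟩ := ih c hc
    exact ⟨b :: l, List.Forall₂.cons hb hl, by simp [hls, hbc]⟩

/-- From a selection with each element in `insert 0 Aⱼ`, build a submultiset of
`∑ Aⱼ` of bounded length with the same sum. -/
lemma aux_select {α : Type*} [AddCommMonoid α] [DecidableEq α] :
    ∀ (L : List (Finset α)) (l : List α),
    List.Forall₂ (· ∈ ·) l (L.map (insert (0 : α))) →
    ∃ T : Multiset α, T ≤ (L.map Finset.val).sum ∧
      Multiset.card T ≤ l.length ∧ T.sum = l.sum := by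
  intro L
  induction L with
  | nil =>
    intro l hf
    cases hf
    exact ⟨0, le_refl _, by simp, by simp⟩
  | cons A L ihL =>
    intro l hf
    rw [List.map_cons] at hf
    cases hf with
    | cons hx hrest =>
    rename_i x rest
    obtain ⟨T, hT, hTc, hTs⟩ := ihL rest hrest
    rw [Finset.mem_insert] at hx
    rcases hx with rfl | hx
    · refine ⟨T, le_trans hT ?_, ?_, ?_⟩
      · rw [List.map_cons, List.sum_cons]; exact le_add_self
      · simp only [List.length_cons]; omega
      · simp [hTs]
    · refine ⟨x ::ₘ T, ?_, ?_, ?_⟩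
      · rw [List.map_cons, List.sum_cons, ← Multiset.singleton_add]
        exact add_le_add (Multiset.singleton_le.2 (Finset.mem_def.1 hx)) hT
      · simpa using Nat.succ_le_succ hTc
      · simp [hTs]

lemma aux_card {α : Type*} (L : List (Finset α)) :
    (L.map (fun A => A.card)).sum = Multiset.card (L.map Finset.val).sum := by
  induction L with
  | nil => simp
  | cons A L ih => simp [ih]

/-- If a sequence (multiset) `S` over `ℤ/pℤ` (`p` prime) has every element with
multiplicity at most `h` and `|S| ≥ p`, then `S` has a nonempty zero-sum
subsequence of length at most `h`. -/
theorem stmt1 (p : ℕ) (hp : p.Prime) (h : ℕ) (S : Multiset (ZMod p))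
    (hmult : ∀ x : ZMod p, S.count x ≤ h) (hcard : p ≤ Multiset.card S) :
    ∃ T : Multiset (ZMod p), T ≤ S ∧ T ≠ 0 ∧ Multiset.card T ≤ h ∧ T.sum = 0 := by
  have hppos : 0 < p := hp.pos
  have hS0 : S ≠ 0 := by
    intro hc
    rw [hc] at hcard
    simp at hcard
    omega
  by_cases h0 : (0 : ZMod p) ∈ S
  · refine ⟨{0}, Multiset.singleton_le.2 h0, by simp, ?_, by simp⟩
    have := hmult 0
    have h1 : 1 ≤ S.count 0 := Multiset.one_le_count_iff_mem.2 h0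
    simpa using le_trans h1 this
  · -- 0 ∉ S
    have hz : ∀ x ∈ S, x ≠ 0 := fun x hx hc => h0 (hc ▸ hx)
    obtain ⟨a, ha⟩ := Multiset.exists_mem_of_ne_zero hS0
    have h1 : 1 ≤ h := le_trans (Multiset.one_le_count_iff_mem.2 ha) (hmult a)
    -- Peel off the first part: the dedup of S
    set S' : Multiset (ZMod p) := S - S.dedup with hS'
    have hS'count : ∀ x, S'.count x ≤ h - 1 := by
      intro x
      rw [hS', Multiset.count_sub, Multiset.count_dedup]
      by_cases hx : x ∈ S
      · have := hmult x
        have hx1 : 1 ≤ S.count x := Multiset.one_le_count_iff_mem.2 hx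
        simp only [hx, if_true]
        omega
      · simp [hx]
    obtain ⟨L', hlen', hsum'⟩ := aux_partition (h - 1) S' hS'count
    have hSsplit : S.dedup + S' = S := add_tsub_cancel_of_le (Multiset.dedup_le S)
    -- The list of finsets for Cauchy-Davenport
    set B : List (Finset (ZMod p)) := S.toFinset :: L'.map (insert 0) with hB
    have hBne : ∀ C ∈ B, C.Nonempty := by
      intro C hC
      rw [hB, List.mem_cons] at hC
      rcases hC with rfl | hC
      · exact ⟨a, Multiset.mem_toFinset.2 ha⟩
      · obtain ⟨A, _, rfl⟩ := List.mem_map.1 hC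
        exact Finset.insert_nonempty _ _
    -- Each part of L' consists of elements of S', hence nonzero, so 0 ∉ A
    have hAzero : ∀ A ∈ L', (0 : ZMod p) ∉ A := by
      intro A hA hmem
      have hle : A.val ≤ (L'.map Finset.val).sum := by
        apply List.single_le_sum (fun x _ => Multiset.zero_le x)
        exact List.mem_map.2 ⟨A, hA, rfl⟩
      rw [hsum'] at hle
      have : (0 : ZMod p) ∈ S' := Multiset.mem_of_le hle (Finset.mem_def.1 hmem)
      have : (0 : ZMod p) ∈ S := Multiset.mem_of_le (Multiset.sub_le_self _ _) this
      exact h0 this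
    -- The sum over B of (card - 1) is ≥ p - 1
    have hsumcard : p ≤ (B.map (fun C => C.card - 1)).sum + 1 := by
      have hded1 : 1 ≤ Multiset.card S.dedup :=
        Multiset.card_pos.2 (mt Multiset.dedup_eq_zero.1 hS0)
      have hcards : (L'.map (fun A => A.card)).sum = Multiset.card S' := by
        rw [← hsum', aux_card]
      have hinsert : ∀ A ∈ L', (insert (0 : ZMod p) A).card - 1 = A.card := by
        intro A hA
        rw [Finset.card_insert_of_notMem (hAzero A hA)]
        omega
      have hmapins : ((L'.map (insert 0)).map (fun C : Finset (ZMod p) => C.card - 1)).sum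
          = (L'.map (fun A => A.card)).sum := by
        rw [List.map_map]
        congr 1
        exact List.map_congr_left (fun A hA => hinsert A hA)
      have hcS : Multiset.card S.dedup + Multiset.card S' = Multiset.card S := by
        rw [← Multiset.card_add, hSsplit]
      rw [hB, List.map_cons, List.sum_cons, hmapins, hcards]
      have htf : (S.toFinset.card : ℕ) = Multiset.card S.dedup := rfl
      rw [htf]
      omega
    -- Cauchy-Davenport: the sumset is everything
    have hcd := aux_cd hp B hBne
    have hmin : min p ((B.map (fun C => C.card - 1)).sum + 1) = p :=
      min_eq_left hsumcard
    rw [hmin] at hcd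
    haveI : Fact p.Prime := ⟨hp⟩
    haveI : NeZero p := ⟨hp.ne_zero⟩
    have hcardZ : Fintype.card (ZMod p) = p := ZMod.card p
    have huniv : B.sum = Finset.univ := by
      apply Finset.eq_univ_of_card
      exact le_antisymm (Finset.card_le_univ _) (by rw [hcardZ]; exact hcd)
    have h0mem : (0 : ZMod p) ∈ B.sum := huniv ▸ Finset.mem_univ _
    obtain ⟨l, hl, hls⟩ := aux_mem_sum B 0 h0mem
    -- l matches B = toFinset :: map (insert 0) L'
    rw [hB] at hl
    cases hl with
    | cons hx1 hrest =>
      rename_i x1 rest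
      obtain ⟨T, hT, hTc, hTs⟩ := aux_select L' rest hrest
      have hrestlen : rest.length = h - 1 := by
        have := List.Forall₂.length_eq hrest
        rw [List.length_map] at this
        rw [this, hlen']
      refine ⟨x1 ::ₘ T, ?_, ?_, ?_, ?_⟩
      · rw [← hSsplit, ← Multiset.singleton_add]
        apply add_le_add
        · exact Multiset.singleton_le.2 (by
            have := Multiset.mem_toFinset.1 hx1
            exact Multiset.mem_dedup.2 this)
        · rw [← hsum']; exact hT
      · exact Multiset.cons_ne_zero
      · rw [Multiset.card_cons]
        omega
      · rw [Multiset.sum_cons, hTs]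
        simpa using hls
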